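/- For the substitution x = u(1-v), y = v(1-u), the Jacobian-style inverse relations hold formally: u and v are the unique formal power series in x, y with zero constant term and u = x + S, v = y + S where S = (1-x-y-√Δ)/2, Δ = 1-2x-2y-2xy+x²+y². Equivalently, u := x + S and v := y + S satisfy x = u(1-v) and y = v(1-u) as formal power series identities. -/

import Mathlib

open PowerSeries

/-- The variable `x` in `ℚ[[x]][[y]]` (outer variable). -/
noncomputable def Xv : PowerSeries (PowerSeries ℚ) := PowerSeries.X
/-- The variable `y` in `ℚ[[x]][[y]]`. -/
noncomputable def Yv : PowerSeries (PowerSeries ℚ) :=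
  PowerSeries.C (R := PowerSeries ℚ) PowerSeries.X

/-- With `sq` the square root of `Δ = 1-2x-2y-2xy+x²+y²` with constant term 1,
set `S = (1-x-y-sq)/2`, `u = x + S`, `v = y + S`.  Then `u(1-v) = x` and
`v(1-u) = y` as formal power series identities. -/
theorem inverse_substitution (sq : PowerSeries (PowerSeries ℚ))
    (hsq : sq ^ 2 = 1 - 2 * Xv - 2 * Yv - 2 * Xv * Yv + Xv ^ 2 + Yv ^ 2)
    (hconst : PowerSeries.constantCoeff (R := PowerSeries ℚ) sq = 1) :
    (Xv + PowerSeries.C (R := PowerSeries ℚ) (PowerSeries.C (R := ℚ) (1/2 : ℚ)) *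
          (1 - Xv - Yv - sq)) *
        (1 - (Yv + PowerSeries.C (R := PowerSeries ℚ) (PowerSeries.C (R := ℚ) (1/2 : ℚ)) *
          (1 - Xv - Yv - sq))) = Xv ∧
    (Yv + PowerSeries.C (R := PowerSeries ℚ) (PowerSeries.C (R := ℚ) (1/2 : ℚ)) *
          (1 - Xv - Yv - sq)) *
        (1 - (Xv + PowerSeries.C (R := PowerSeries ℚ) (PowerSeries.C (R := ℚ) (1/2 : ℚ)) *
          (1 - Xv - Yv - sq))) = Yv := by
  set c : PowerSeries (PowerSeries ℚ) :=
    PowerSeries.C (R := PowerSeries ℚ) (PowerSeries.C (R := ℚ) (1/2 : ℚ)) with hc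
  have h2 : 2 * c = 1 := by
    rw [hc, show (2 : PowerSeries (PowerSeries ℚ)) =
      PowerSeries.C (R := PowerSeries ℚ) (PowerSeries.C (R := ℚ) (2 : ℚ)) by
        rw [map_ofNat, map_ofNat],
      ← map_mul, ← map_mul]
    norm_num
  constructor
  · linear_combination (-c^2) * hsq +
      (-c * (1 - Xv - Yv)^2 + (2*c+1) * Xv * Yv + c * (1 - Xv - Yv) * sq) * h2
  · linear_combination (-c^2) * hsq +
      (-c * (1 - Xv - Yv)^2 + (2*c+1) * Xv * Yv + c * (1 - Xv - Yv) * sq) * h2
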